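/- Convexity bound on accessible information: With the ensemble and notation of the previous statement, the accessible information satisfies I_acc(E) ≤ log₂ N − min_{|Φ⟩} H[Q(Φ)], where the minimum is over all unit vectors |Φ⟩ ∈ C^N. -/

import Mathlib

open Matrix

/-- `η(x) = −x log₂ x`. -/
noncomputable def eta2 (x : ℝ) : ℝ := -x * Real.logb 2 x

lemma eta2_zero : eta2 0 = 0 := by simp [eta2]

lemma eta2_nonneg {x : ℝ} (h0 : 0 ≤ x) (h1 : x ≤ 1) : 0 ≤ eta2 x := by
  have : Real.logb 2 x ≤ 0 := Real.logb_nonpos one_lt_two h0 h1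
  have := mul_nonneg h0 (neg_nonneg.mpr this)
  simpa [eta2, mul_comm] using this

lemma eta2_mul {a b : ℝ} (ha : 0 < a) (hb : 0 ≤ b) :
    eta2 (a * b) = a * eta2 b + b * eta2 a := by
  rcases eq_or_lt_of_le hb with h | h
  · simp [← h, eta2_zero]
  · unfold eta2
    rw [Real.logb_mul ha.ne' h.ne']
    ring

lemma sq_norm_complex (z : ℂ) : ((‖z‖ : ℝ) : ℂ) ^ 2 = z * star z := by
  rw [show ((‖z‖:ℝ):ℂ)^2 = ((‖z‖^2 : ℝ) : ℂ) by push_cast; ring]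
  simp [Complex.mul_conj, Complex.normSq_eq_norm_sq]

/-- convexity bound on the accessible information: with the uniform
ensemble `{1/N, ρ_m}`, `ρ_m = (1/K)Σ_k |Ψ_{mk}⟩⟨Ψ_{mk}|`, the mutual information of any
rank-one POVM measurement is at most `log₂ N − min_{|Φ⟩} H[Q(Φ)]`; hence the accessible
information obeys `I_acc(E) ≤ log₂ N − min_{|Φ⟩} H[Q(Φ)]`. -/
theorem stmt15 (N K : ℕ) (hN : 0 < N) (hK : 0 < K)
    (Ψ : Fin N → Fin K → (Fin N → ℂ))
    (hONB : ∀ k (m m' : Fin N),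
      (∑ i, star (Ψ m k i) * Ψ m' k i) = if m = m' then 1 else 0)
    {ι : Type*} [Fintype ι] (μ : ι → ℝ) (Φ : ι → (Fin N → ℂ))
    (hμ : ∀ i, 0 < μ i)
    (hunit : ∀ i, ∑ w, ‖Φ i w‖ ^ 2 = 1)
    (hPOVM : ∀ a b : Fin N,
      ∑ i, (μ i : ℂ) * (Φ i a * star (Φ i b)) = if a = b then 1 else 0)
    (Q : (Fin N → ℂ) → Fin N → ℝ)
    (hQ : ∀ φ m, Q φ m = (K : ℝ)⁻¹ * ∑ k, ‖∑ w, star (φ w) * Ψ m k w‖ ^ 2)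
    (p : Fin N → ι → ℝ)
    (hp : ∀ m i, p m i = (N : ℝ)⁻¹ * (μ i * Q (Φ i) m)) :
    (∑ m, eta2 (∑ i, p m i)) + (∑ i, eta2 (∑ m, p m i)) - (∑ m, ∑ i, eta2 (p m i))
      ≤ Real.logb 2 N
        - sInf {x : ℝ | ∃ φ : Fin N → ℂ, (∑ w, ‖φ w‖ ^ 2 = 1) ∧
            x = ∑ m, eta2 (Q φ m)} := by
  have hNR : (0:ℝ) < N := by exact_mod_cast hN
  have hKR : (0:ℝ) < K := by exact_mod_cast hK
  -- dual orthonormality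
  have hdual : ∀ (k : Fin K) (w w' : Fin N),
      ∑ m, Ψ m k w * star (Ψ m k w') = if w = w' then (1:ℂ) else 0 := by
    intro k w w'
    set M : Matrix (Fin N) (Fin N) ℂ := Matrix.of (fun m i => Ψ m k i) with hM
    have h1 : M * Mᴴ = 1 := by
      ext m m'
      rw [Matrix.mul_apply, Matrix.one_apply]
      calc ∑ i, M m i * (Mᴴ) i m' = ∑ i, star (Ψ m' k i) * Ψ m k i := by
            simp [hM, Matrix.conjTranspose_apply, mul_comm]
        _ = if m' = m then 1 else 0 := hONB k m' m
        _ = if m = m' then 1 else 0 := by simp [eq_comm]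
    have h2 : Mᴴ * M = 1 := mul_eq_one_comm.mp h1
    have h3 := congrFun (congrFun h2 w') w
    rw [Matrix.mul_apply, Matrix.one_apply] at h3
    calc ∑ m, Ψ m k w * star (Ψ m k w') = ∑ m, (Mᴴ) w' m * M m w := by
          simp [hM, Matrix.conjTranspose_apply, mul_comm]
      _ = if w' = w then 1 else 0 := h3
      _ = if w = w' then 1 else 0 := by simp [eq_comm]
  -- Parseval: for any unit vector φ and any k
  have parsevalk : ∀ (φ : Fin N → ℂ), (∑ w, ‖φ w‖ ^ 2 = 1) → ∀ k : Fin K,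
      ∑ m, ‖∑ w, star (φ w) * Ψ m k w‖ ^ 2 = 1 := by
    intro φ hφ k
    set c : Fin N → ℂ := fun m => ∑ w, star (φ w) * Ψ m k w with hc
    have key : ∑ m, c m * star (c m) = 1 := by
      have expand : ∀ m, c m * star (c m)
          = ∑ w, ∑ w', (star (φ w) * φ w') * (Ψ m k w * star (Ψ m k w')) := by
        intro m
        have hs : star (c m) = ∑ w', φ w' * star (Ψ m k w') := by
          simp [hc, star_sum, star_mul', star_star, mul_comm]
        rw [hc, hs, Finset.sum_mul_sum]
        exact Finset.sum_congr rfl fun w _ => Finset.sum_congr rfl fun w' _ => by ring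
      calc ∑ m, c m * star (c m)
          = ∑ m, ∑ w, ∑ w', (star (φ w) * φ w') * (Ψ m k w * star (Ψ m k w')) :=
            Finset.sum_congr rfl fun m _ => expand m
        _ = ∑ w, ∑ w', (star (φ w) * φ w') * ∑ m, Ψ m k w * star (Ψ m k w') := by
            rw [Finset.sum_comm]
            refine Finset.sum_congr rfl fun w _ => ?_
            rw [Finset.sum_comm]
            exact Finset.sum_congr rfl fun w' _ => (Finset.mul_sum _ _ _).symm
        _ = ∑ w, ∑ w', (star (φ w) * φ w') * (if w = w' then (1:ℂ) else 0) := by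
            exact Finset.sum_congr rfl fun w _ => Finset.sum_congr rfl fun w' _ => by
              rw [hdual]
        _ = ∑ w, star (φ w) * φ w := by simp
        _ = ((∑ w, ‖φ w‖ ^ 2 : ℝ) : ℂ) := by
            push_cast
            exact Finset.sum_congr rfl fun w _ => by
              rw [sq_norm_complex]; ring
        _ = 1 := by rw [hφ]; norm_num
    have : ((∑ m, ‖c m‖ ^ 2 : ℝ) : ℂ) = 1 := by
      push_cast
      rw [← key]
      exact Finset.sum_congr rfl fun m _ => by rw [← sq_norm_complex]
    exact_mod_cast this
  have hQnonneg : ∀ φ m, 0 ≤ Q φ m := by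
    intro φ m; rw [hQ]; positivity
  have hQsum : ∀ (φ : Fin N → ℂ), (∑ w, ‖φ w‖ ^ 2 = 1) → ∑ m, Q φ m = 1 := by
    intro φ hφ
    simp only [hQ]
    rw [← Finset.mul_sum, Finset.sum_comm]
    rw [Finset.sum_congr rfl fun k _ => parsevalk φ hφ k]
    simp [hKR.ne']
  -- POVM completeness, μ-weighted, for each m, k
  have povmk : ∀ (m : Fin N) (k : Fin K),
      ∑ i, μ i * ‖∑ w, star (Φ i w) * Ψ m k w‖ ^ 2 = 1 := by
    intro m k
    have key : ∑ i, (μ i : ℂ) * ((∑ w, star (Φ i w) * Ψ m k w)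
        * star (∑ w, star (Φ i w) * Ψ m k w)) = 1 := by
      have expand : ∀ i, (μ i : ℂ) * ((∑ w, star (Φ i w) * Ψ m k w)
          * star (∑ w, star (Φ i w) * Ψ m k w))
          = ∑ w, ∑ w', (Ψ m k w * star (Ψ m k w')) * ((μ i : ℂ) * (Φ i w' * star (Φ i w))) := by
        intro i
        have hs : star (∑ w, star (Φ i w) * Ψ m k w) = ∑ w', Φ i w' * star (Ψ m k w') := by
          simp [star_sum, star_mul', star_star, mul_comm]
        rw [hs, Finset.sum_mul_sum, Finset.mul_sum]
        refine Finset.sum_congr rfl fun w _ => ?_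
        rw [Finset.mul_sum]
        exact Finset.sum_congr rfl fun w' _ => by ring
      calc ∑ i, (μ i : ℂ) * ((∑ w, star (Φ i w) * Ψ m k w)
            * star (∑ w, star (Φ i w) * Ψ m k w))
          = ∑ i, ∑ w, ∑ w', (Ψ m k w * star (Ψ m k w'))
              * ((μ i : ℂ) * (Φ i w' * star (Φ i w))) :=
            Finset.sum_congr rfl fun i _ => expand i
        _ = ∑ w, ∑ w', (Ψ m k w * star (Ψ m k w'))
              * ∑ i, (μ i : ℂ) * (Φ i w' * star (Φ i w)) := by
            rw [Finset.sum_comm]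
            refine Finset.sum_congr rfl fun w _ => ?_
            rw [Finset.sum_comm]
            exact Finset.sum_congr rfl fun w' _ => (Finset.mul_sum _ _ _).symm
        _ = ∑ w, Ψ m k w * star (Ψ m k w) := by
            refine Finset.sum_congr rfl fun w _ => ?_
            simp only [hPOVM]
            simp [mul_ite, Finset.sum_ite_eq, eq_comm]
        _ = ∑ w, star (Ψ m k w) * Ψ m k w := Finset.sum_congr rfl fun w _ => mul_comm _ _
        _ = 1 := by rw [hONB k m m]; simp
    have : ((∑ i, μ i * ‖∑ w, star (Φ i w) * Ψ m k w‖ ^ 2 : ℝ) : ℂ) = 1 := by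
      push_cast
      rw [← key]
      refine Finset.sum_congr rfl fun i _ => ?_
      rw [← sq_norm_complex]
    exact_mod_cast this
  have hQsum' : ∀ m, ∑ i, μ i * Q (Φ i) m = 1 := by
    intro m
    have : ∑ i, μ i * Q (Φ i) m
        = (K:ℝ)⁻¹ * ∑ k, ∑ i, μ i * ‖∑ w, star (Φ i w) * Ψ m k w‖ ^ 2 := by
      simp only [hQ, Finset.mul_sum]
      rw [Finset.sum_comm]
      exact Finset.sum_congr rfl fun i _ => Finset.sum_congr rfl fun k _ => by ring
    rw [this, Finset.sum_congr rfl fun k _ => povmk m k]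
    simp [hKR.ne']
  -- total weight
  have hμsum : ∑ i, μ i = N := by
    have key : ∑ i, (μ i : ℂ) = N := by
      calc ∑ i, (μ i : ℂ) = ∑ i, (μ i : ℂ) * ∑ a, Φ i a * star (Φ i a) := by
            refine Finset.sum_congr rfl fun i _ => ?_
            have : ∑ a, Φ i a * star (Φ i a) = ((∑ a, ‖Φ i a‖ ^ 2 : ℝ) : ℂ) := by
              push_cast
              exact Finset.sum_congr rfl fun a _ => (sq_norm_complex _).symm
            rw [this, hunit i]; norm_num
        _ = ∑ a : Fin N, ∑ i, (μ i : ℂ) * (Φ i a * star (Φ i a)) := by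
            rw [Finset.sum_comm]
            exact Finset.sum_congr rfl fun i _ => Finset.mul_sum _ _ _
        _ = ∑ a : Fin N, 1 := Finset.sum_congr rfl fun a _ => by rw [hPOVM a a]; simp
        _ = N := by simp
    exact_mod_cast key
  -- the set S
  set S : Set ℝ := {x : ℝ | ∃ φ : Fin N → ℂ, (∑ w, ‖φ w‖ ^ 2 = 1) ∧
      x = ∑ m, eta2 (Q φ m)} with hS
  have hSbdd : BddBelow S := by
    refine ⟨0, fun x hx => ?_⟩
    obtain ⟨φ, hφ, rfl⟩ := hx
    refine Finset.sum_nonneg fun m _ => eta2_nonneg (hQnonneg φ m) ?_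
    calc Q φ m ≤ ∑ m', Q φ m' :=
          Finset.single_le_sum (fun m' _ => hQnonneg φ m') (Finset.mem_univ m)
      _ = 1 := hQsum φ hφ
  -- marginals
  have hmarg1 : ∀ m, ∑ i, p m i = (N:ℝ)⁻¹ := by
    intro m
    simp only [hp]
    rw [← Finset.mul_sum, hQsum' m, mul_one]
  have hmarg2 : ∀ i, ∑ m, p m i = (N:ℝ)⁻¹ * μ i := by
    intro i
    simp only [hp]
    rw [← Finset.mul_sum, ← Finset.mul_sum, hQsum (Φ i) (hunit i), mul_one]
  -- joint term
  have hjoint : ∀ i, ∑ m, eta2 (p m i)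
      = ((N:ℝ)⁻¹ * μ i) * (∑ m, eta2 (Q (Φ i) m)) + eta2 ((N:ℝ)⁻¹ * μ i) := by
    intro i
    have ha : (0:ℝ) < (N:ℝ)⁻¹ * μ i := mul_pos (inv_pos.mpr hNR) (hμ i)
    calc ∑ m, eta2 (p m i)
        = ∑ m, (((N:ℝ)⁻¹ * μ i) * eta2 (Q (Φ i) m)
            + Q (Φ i) m * eta2 ((N:ℝ)⁻¹ * μ i)) := by
          refine Finset.sum_congr rfl fun m _ => ?_
          rw [hp, ← mul_assoc, eta2_mul ha (hQnonneg _ m)]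
      _ = ((N:ℝ)⁻¹ * μ i) * (∑ m, eta2 (Q (Φ i) m))
            + (∑ m, Q (Φ i) m) * eta2 ((N:ℝ)⁻¹ * μ i) := by
          rw [Finset.sum_add_distrib, ← Finset.mul_sum, ← Finset.sum_mul]
      _ = _ := by rw [hQsum (Φ i) (hunit i), one_mul]
  -- compute the three sums
  have e1 : ∑ m, eta2 (∑ i, p m i) = Real.logb 2 N := by
    rw [Finset.sum_congr rfl fun m _ => by rw [hmarg1 m]]
    rw [Finset.sum_const, Finset.card_univ, Fintype.card_fin, nsmul_eq_mul]
    unfold eta2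
    rw [Real.logb_inv]
    field_simp
  have e3 : ∑ m, ∑ i, eta2 (p m i)
      = (∑ i, ((N:ℝ)⁻¹ * μ i) * (∑ m, eta2 (Q (Φ i) m)))
        + ∑ i, eta2 ((N:ℝ)⁻¹ * μ i) := by
    rw [Finset.sum_comm]
    rw [Finset.sum_congr rfl fun i _ => hjoint i]
    rw [Finset.sum_add_distrib]
  have e2 : ∑ i, eta2 (∑ m, p m i) = ∑ i, eta2 ((N:ℝ)⁻¹ * μ i) :=
    Finset.sum_congr rfl fun i _ => by rw [hmarg2 i]
  rw [e1, e2, e3]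
  have hfinal : sInf S ≤ ∑ i, ((N:ℝ)⁻¹ * μ i) * (∑ m, eta2 (Q (Φ i) m)) := by
    have hmem : ∀ i, (∑ m, eta2 (Q (Φ i) m)) ∈ S := fun i => ⟨Φ i, hunit i, rfl⟩
    calc sInf S = (∑ i, (N:ℝ)⁻¹ * μ i) * sInf S := by
          rw [← Finset.mul_sum, hμsum]
          field_simp
      _ = ∑ i, ((N:ℝ)⁻¹ * μ i) * sInf S := Finset.sum_mul _ _ _
      _ ≤ ∑ i, ((N:ℝ)⁻¹ * μ i) * (∑ m, eta2 (Q (Φ i) m)) := by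
          refine Finset.sum_le_sum fun i _ => ?_
          have : (0:ℝ) ≤ (N:ℝ)⁻¹ * μ i := (mul_pos (inv_pos.mpr hNR) (hμ i)).le
          exact mul_le_mul_of_nonneg_left (csInf_le hSbdd (hmem i)) this
  linarith
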